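/- Let A be a skew PBW extension of a ring R with variables x_1, …, x_n. Define F_0 := R and, for m ≥ 1, F_m := {f ∈ A : deg(f) ≤ m}. Then A is an ℕ-filtered ring with this filtration: F_m ⊆ F_{m+1}, ⋃_m F_m = A, and F_m · F_p ⊆ F_{m+p} for all m, p ≥ 0. Moreover, the associated graded ring Gr(A) = ⊕_{m≥0} F_m/F_{m−1} is a quasi-commutative skew PBW extension of R in the classes x̄_1, …, x̄_n of the variables: the standard monomials in x̄_1, …, x̄_n form a basis of Gr(A) as a free left R-module, x̄_i r = σ_i(r) x̄_i for every r ∈ R \ {0} and 1 ≤ i ≤ n, and x̄_j x̄_i = c_{i,j} x̄_i x̄_j for all i, j, where σ_i and c_{i,j} are the parameters of A. -/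

import Mathlib

/-- The standard monomial `x^α = x₁^{α₁} ⋯ xₙ^{αₙ}` (ordered product). -/
def stdMon {A : Type*} [Ring A] {n : ℕ} (x : Fin n → A) (α : Fin n → ℕ) : A :=
  (List.ofFn fun i => x i ^ α i).prod

/-- `A` is a skew PBW extension of `R` (embedded via `φ`) with variables `x₁,…,xₙ`. -/
def IsSkewPBWExt {R A : Type*} [Ring R] [Ring A] {n : ℕ} (φ : R →+* A) (x : Fin n → A) :
    Prop :=
  Function.Injective φ ∧
  (letI : Module R A := Module.compHom A φ;
    LinearIndependent R (stdMon x) ∧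
      Submodule.span R (Set.range (stdMon x)) = (⊤ : Submodule R A)) ∧
  (∀ i : Fin n, ∀ r : R, r ≠ 0 → ∃ c : R, c ≠ 0 ∧ ∃ s : R,
      x i * φ r - φ c * x i = φ s) ∧
  (∀ i j : Fin n, ∃ c : R, c ≠ 0 ∧ ∃ s : R, ∃ t : Fin n → R,
      x j * x i - φ c * (x i * x j) = φ s + ∑ k, φ (t k) * x k)

/-- `F_m = {f ∈ A | deg f ≤ m}`: the `R`-span of the standard monomials of degree `≤ m`. -/
def pbwFilt {R A : Type*} [Ring R] [Ring A] {n : ℕ} (φ : R →+* A) (x : Fin n → A)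
    (m : ℕ) : AddSubgroup A :=
  AddSubgroup.closure {a | ∃ (r : R) (α : Fin n → ℕ), (∑ i, α i) ≤ m ∧ a = φ r * stdMon x α}


lemma stdMon_zero {A : Type*} [Ring A] {n : ℕ} (x : Fin n → A) {α : Fin n → ℕ}
    (h : ∀ i, α i = 0) : stdMon x α = 1 := by
  apply List.prod_eq_one
  intro a ha
  rw [List.mem_ofFn] at ha
  obtain ⟨i, rfl⟩ := ha
  simp [h i]

lemma stdMon_succ {A : Type*} [Ring A] {n : ℕ} (x : Fin (n+1) → A) (α : Fin (n+1) → ℕ) :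
    stdMon x α = x 0 ^ α 0 * stdMon (fun j : Fin n => x j.succ) (fun j => α j.succ) := by
  simp [stdMon, List.ofFn_succ]

lemma stdMon_mul_X {A : Type*} [Ring A] {n : ℕ} (x : Fin n → A) (β : Fin n → ℕ) (i : Fin n)
    (hβ : ∀ k, i < k → β k = 0) :
    stdMon x β * x i = stdMon x (Function.update β i (β i + 1)) := by
  induction n with
  | zero => exact i.elim0
  | succ n ih =>
    rcases Fin.eq_zero_or_eq_succ i with rfl | ⟨j, rfl⟩
    · have htail : ∀ k : Fin n, β k.succ = 0 := fun k => hβ k.succ (Fin.succ_pos k)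
      rw [stdMon_succ, stdMon_zero _ htail, stdMon_succ]
      have h0 : Function.update β 0 (β 0 + 1) 0 = β 0 + 1 := Function.update_self _ _ _
      have ht : ∀ k : Fin n, Function.update β 0 (β 0 + 1) k.succ = 0 := by
        intro k
        rw [Function.update_of_ne (by simp [Fin.ext_iff])]
        exact htail k
      rw [stdMon_zero _ ht, h0, mul_one, mul_one, pow_succ]
    · rw [stdMon_succ, mul_assoc, ih (fun k => x k.succ) (fun k => β k.succ) j
        (fun k hk => hβ k.succ (by simpa using hk)), stdMon_succ]
      have h0 : Function.update β j.succ (β j.succ + 1) 0 = β 0 :=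
        Function.update_of_ne (by simp [Fin.ext_iff]) _ _
      rw [h0]
      congr 1
      congr 1
      funext k
      by_cases hkj : k = j
      · subst hkj; simp
      · rw [Function.update_of_ne hkj, Function.update_of_ne (fun hh => hkj (Fin.succ_injective _ hh))]


section
variable {R A : Type*} [Ring R] [Ring A] {n : ℕ} (φ : R →+* A) (x : Fin n → A)

lemma gen_mem_F {r : R} {α : Fin n → ℕ} {m : ℕ} (hα : (∑ i, α i) ≤ m) :
    φ r * stdMon x α ∈ pbwFilt φ x m :=
  AddSubgroup.subset_closure ⟨r, α, hα, rfl⟩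

lemma stdMon_mem_F {α : Fin n → ℕ} {m : ℕ} (hα : (∑ i, α i) ≤ m) :
    stdMon x α ∈ pbwFilt φ x m := by
  have := gen_mem_F φ x (r := 1) hα
  rwa [map_one, one_mul] at this

lemma F_mono {m m' : ℕ} (h : m ≤ m') : pbwFilt φ x m ≤ pbwFilt φ x m' := by
  apply AddSubgroup.closure_mono
  rintro a ⟨r, α, hα, rfl⟩
  exact ⟨r, α, le_trans hα h, rfl⟩

lemma smul_mem_F (r : R) {m : ℕ} {a : A} (ha : a ∈ pbwFilt φ x m) :
    φ r * a ∈ pbwFilt φ x m := by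
  induction ha using AddSubgroup.closure_induction with
  | mem b hb =>
    obtain ⟨r', α, hα, rfl⟩ := hb
    rw [← mul_assoc, ← map_mul]
    exact gen_mem_F φ x hα
  | zero => simpa using (pbwFilt φ x m).zero_mem
  | add b c _ _ hb hc => rw [mul_add]; exact (pbwFilt φ x m).add_mem hb hc
  | neg b _ hb => rw [mul_neg]; exact (pbwFilt φ x m).neg_mem hb

lemma exists_peel (β : Fin n → ℕ) (hβ : ∃ j, β j ≠ 0) :
    ∃ (γ : Fin n → ℕ) (j : Fin n),
      stdMon x β = stdMon x γ * x j ∧ (∑ k, γ k) + 1 = ∑ k, β k ∧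
      (∀ k, γ k ≤ β k) ∧ (∀ k, j < k → β k = 0) ∧ γ j + 1 = β j ∧
      Function.update γ j (γ j + 1) = β := by
  classical
  obtain ⟨j0, hj0⟩ := hβ
  set s : Finset (Fin n) := Finset.univ.filter (fun k => β k ≠ 0) with hs
  have hsne : s.Nonempty := ⟨j0, by simp [hs, hj0]⟩
  set j := s.max' hsne with hj
  have hjmem : β j ≠ 0 := by have := s.max'_mem hsne; simpa [hs] using this
  have htop : ∀ k, j < k → β k = 0 := by
    intro k hk
    by_contra hkne
    exact absurd (s.le_max' k (by simp [hs, hkne])) (not_le.mpr hk)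
  set γ := Function.update β j (β j - 1) with hγ
  have hγtop : ∀ k, j < k → γ k = 0 := by
    intro k hk
    rw [hγ, Function.update_of_ne (by rintro rfl; exact lt_irrefl _ hk)]
    exact htop k hk
  have hupd : Function.update γ j (γ j + 1) = β := by
    funext k
    by_cases hkj : k = j
    · subst hkj; simp [hγ]; omega
    · rw [Function.update_of_ne hkj, hγ, Function.update_of_ne hkj]
  have hγjβ : γ j + 1 = β j := by simp only [hγ, Function.update_self]; omega
  refine ⟨γ, j, ?_, ?_, ?_, htop, hγjβ, hupd⟩
  · have := stdMon_mul_X x γ j hγtop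
    rw [hupd] at this
    exact this.symm
  · have e1 : ∑ k, β k = β j + ∑ k ∈ Finset.univ.erase j, β k :=
      (Finset.add_sum_erase _ _ (Finset.mem_univ j)).symm
    have e2 : ∑ k, γ k = γ j + ∑ k ∈ Finset.univ.erase j, γ k :=
      (Finset.add_sum_erase _ _ (Finset.mem_univ j)).symm
    have e3 : ∑ k ∈ Finset.univ.erase j, γ k = ∑ k ∈ Finset.univ.erase j, β k :=
      Finset.sum_congr rfl fun k hk => by
        rw [hγ, Function.update_of_ne (Finset.ne_of_mem_erase hk)]
    have e4 : γ j = β j - 1 := by simp [hγ]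
    omega
  · intro k
    by_cases hkj : k = j
    · subst hkj; simp [hγ]
    · rw [hγ, Function.update_of_ne hkj]

end
section
variable {R A : Type*} [Ring R] [Ring A] {n : ℕ} (φ : R →+* A) (x : Fin n → A)

lemma sum_update_succ (β : Fin n → ℕ) (i : Fin n) :
    ∑ k, Function.update β i (β i + 1) k = (∑ k, β k) + 1 := by
  have e1 : ∑ k, β k = β i + ∑ k ∈ Finset.univ.erase i, β k :=
    (Finset.add_sum_erase _ _ (Finset.mem_univ i)).symm
  have e2 : ∑ k, Function.update β i (β i + 1) k
      = Function.update β i (β i + 1) i + ∑ k ∈ Finset.univ.erase i, Function.update β i (β i + 1) k :=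
    (Finset.add_sum_erase _ _ (Finset.mem_univ i)).symm
  have e3 : ∑ k ∈ Finset.univ.erase i, Function.update β i (β i + 1) k
      = ∑ k ∈ Finset.univ.erase i, β k :=
    Finset.sum_congr rfl fun k hk => by
      rw [Function.update_of_ne (Finset.ne_of_mem_erase hk)]
  rw [e2, e3, Function.update_self, e1]
  omega

/-- Auxiliary subgroup: combinations `φ a * x^γ` with `γ ≤ β` pointwise. -/
def Wgrp (β : Fin n → ℕ) : AddSubgroup A :=
  AddSubgroup.closure {b | ∃ (a : R) (γ : Fin n → ℕ), (∀ k, γ k ≤ β k) ∧ b = φ a * stdMon x γ}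

lemma Wgrp_le_F (β : Fin n → ℕ) : Wgrp φ x β ≤ pbwFilt φ x (∑ k, β k) := by
  apply AddSubgroup.closure_le _ |>.mpr
  rintro b ⟨a, γ, hγ, rfl⟩
  exact gen_mem_F φ x (Finset.sum_le_sum fun k _ => hγ k)

variable (σ δ : Fin n → R → R)
  (hσ : ∀ (i : Fin n) (r : R), x i * φ r = φ (σ i r) * x i + φ (δ i r))

include hσ in
/-- Commuting a scalar past a standard monomial stays within `Wgrp`. -/
lemma stdMon_mul_φ (β : Fin n → ℕ) (r : R) : stdMon x β * φ r ∈ Wgrp φ x β := by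
  generalize hM : (∑ k, β k) = M
  induction M using Nat.strong_induction_on generalizing β r with
  | _ M IH =>
  by_cases h0 : ∀ k, β k = 0
  · rw [stdMon_zero x h0, one_mul]
    exact AddSubgroup.subset_closure ⟨r, β, fun k => le_refl _, by rw [stdMon_zero x h0, mul_one]⟩
  · push_neg at h0
    obtain ⟨γ, j, hpeel, hsum, hle, htop, hγj, -⟩ := exists_peel x β h0
    rw [hpeel, mul_assoc, hσ j r, mul_add, ← mul_assoc]
    have hγle : ∀ k, γ k ≤ β k := hle
    have hWmono : Wgrp φ x γ ≤ Wgrp φ x β :=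
      AddSubgroup.closure_mono (by
        rintro b ⟨a, μ, hμ, rfl⟩
        exact ⟨a, μ, fun k => le_trans (hμ k) (hγle k), rfl⟩)
    have hIH1 : stdMon x γ * φ (σ j r) ∈ Wgrp φ x γ :=
      IH (∑ k, γ k) (by omega) γ _ rfl
    have hIH2 : stdMon x γ * φ (δ j r) ∈ Wgrp φ x γ :=
      IH (∑ k, γ k) (by omega) γ _ rfl
    refine AddSubgroup.add_mem _ ?_ (hWmono hIH2)
    -- (stdMon γ * φ (σ j r)) * x j ∈ Wgrp β
    have hclosed : ∀ b ∈ Wgrp φ x γ, b * x j ∈ Wgrp φ x β := by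
      intro b hb
      induction hb using AddSubgroup.closure_induction with
      | mem b hb =>
        obtain ⟨a, μ, hμ, rfl⟩ := hb
        have hμtop : ∀ k, j < k → μ k = 0 := fun k hk =>
          Nat.le_antisymm (le_trans (hμ k) (le_trans (hγle k) (le_of_eq (htop k hk)))) (Nat.zero_le _)
        rw [mul_assoc, stdMon_mul_X x μ j hμtop]
        refine AddSubgroup.subset_closure ⟨a, _, fun k => ?_, rfl⟩
        by_cases hkj : k = j
        · rw [hkj, Function.update_self]
          have h1 := hμ j
          omega
        · rw [Function.update_of_ne hkj]; exact le_trans (hμ k) (hγle k)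
      | zero => rw [zero_mul]; exact AddSubgroup.zero_mem _
      | add b c hb hc ihb ihc => rw [add_mul]; exact AddSubgroup.add_mem _ ihb ihc
      | neg b hb ihb => rw [neg_mul]; exact AddSubgroup.neg_mem _ ihb
    exact hclosed _ hIH1
end
section
variable {R A : Type*} [Ring R] [Ring A] {n : ℕ} (φ : R →+* A) (x : Fin n → A)
  (σ δ : Fin n → R → R)
  (hσ : ∀ (i : Fin n) (r : R), x i * φ r = φ (σ i r) * x i + φ (δ i r))
  (c : Fin n → Fin n → R)
  (hrel : ∀ i j : Fin n, ∃ (s : R) (t : Fin n → R),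
      x j * x i = φ (c i j) * (x i * x j) + φ s + ∑ k, φ (t k) * x k)

include hσ hrel in
lemma stdMon_mul_X_mem : ∀ (N : ℕ) (β : Fin n → ℕ) (i : Fin n),
    (∑ k, β k) * (n + 1) + (n - i.val) ≤ N →
    stdMon x β * x i ∈ pbwFilt φ x ((∑ k, β k) + 1) := by
  intro N
  induction N using Nat.strong_induction_on with
  | _ N IH =>
  -- helper: multiply an element of F p on the right by x k, at smaller measure
  have key : ∀ (p : ℕ) (k : Fin n), p * (n + 1) + (n - k.val) < N →
      ∀ a ∈ pbwFilt φ x p, a * x k ∈ pbwFilt φ x (p + 1) := by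
    intro p k hpk a ha
    induction ha using AddSubgroup.closure_induction with
    | mem b hb =>
      obtain ⟨r, ν, hν, rfl⟩ := hb
      have h1 : stdMon x ν * x k ∈ pbwFilt φ x ((∑ l, ν l) + 1) :=
        IH ((∑ l, ν l) * (n + 1) + (n - k.val))
          (lt_of_le_of_lt (by have := Nat.mul_le_mul_right (n+1) hν; omega) hpk) ν k (le_refl _)
      rw [mul_assoc]
      exact F_mono φ x (by omega) (smul_mem_F φ x r h1)
    | zero => rw [zero_mul]; exact AddSubgroup.zero_mem _
    | add b d hb hd ihb ihd => rw [add_mul]; exact AddSubgroup.add_mem _ ihb ihd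
    | neg b hb ihb => rw [neg_mul]; exact AddSubgroup.neg_mem _ ihb
  intro β i hN
  by_cases hcase : ∀ k, i < k → β k = 0
  · rw [stdMon_mul_X x β i hcase]
    exact stdMon_mem_F φ x (le_of_eq (sum_update_succ β i))
  · push_neg at hcase
    obtain ⟨k0, hk0i, hk0⟩ := hcase
    obtain ⟨γ, j, hpeel, hsum, hle, htop, hγj, -⟩ := exists_peel x β ⟨k0, hk0⟩
    have hij : i < j := by
      by_contra hji
      exact hk0 (htop k0 (lt_of_le_of_lt (not_lt.mp hji) hk0i))
    obtain ⟨s, t, hst⟩ := hrel i j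
    have hiv : i.val < j.val := hij
    have hjn : j.val < n := j.isLt
    have hβpos : (∑ k, β k) = (∑ k, γ k) + 1 := hsum.symm
    have hq : (∑ l, γ l) * (n + 1) + (n + 1) = (∑ l, β l) * (n + 1) := by
      rw [← hsum]; ring
    rw [hpeel, mul_assoc, hst, mul_add, mul_add, Finset.mul_sum]
    refine AddSubgroup.add_mem _ (AddSubgroup.add_mem _ ?_ ?_) (AddSubgroup.sum_mem _ ?_)
    · -- stdMon γ * (φ c * (x i * x j))
      have hW : stdMon x γ * φ (c i j) ∈ Wgrp φ x γ := stdMon_mul_φ φ x σ δ hσ γ _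
      have hclosed : ∀ b ∈ Wgrp φ x γ, b * (x i * x j) ∈ pbwFilt φ x ((∑ k, β k) + 1) := by
        intro b hb
        induction hb using AddSubgroup.closure_induction with
        | mem b hb =>
          obtain ⟨a, μ, hμ, rfl⟩ := hb
          have hμs : (∑ l, μ l) ≤ ∑ l, γ l := Finset.sum_le_sum fun l _ => hμ l
          have h1 : stdMon x μ * x i ∈ pbwFilt φ x ((∑ l, μ l) + 1) :=
            IH ((∑ l, μ l) * (n + 1) + (n - i.val))
              (by
                have h2 : (∑ l, μ l) * (n+1) ≤ (∑ l, γ l) * (n+1) := Nat.mul_le_mul_right _ hμs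
                omega) μ i (le_refl _)
          have h2 : (stdMon x μ * x i) * x j ∈ pbwFilt φ x ((∑ l, μ l) + 1 + 1) :=
            key ((∑ l, μ l) + 1) j
              (by
                have h2 : (∑ l, μ l) * (n+1) ≤ (∑ l, γ l) * (n+1) := Nat.mul_le_mul_right _ hμs
                have h4 : ((∑ l, μ l) + 1) * (n+1) = (∑ l, μ l) * (n+1) + (n+1) := by ring
                omega)
              _ h1
          have heq : φ a * stdMon x μ * (x i * x j) = φ a * ((stdMon x μ * x i) * x j) := by
            simp only [mul_assoc]
          rw [heq]
          exact F_mono φ x (by omega) (smul_mem_F φ x a h2)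
        | zero => rw [zero_mul]; exact AddSubgroup.zero_mem _
        | add b d hb hd ihb ihd => rw [add_mul]; exact AddSubgroup.add_mem _ ihb ihd
        | neg b hb ihb => rw [neg_mul]; exact AddSubgroup.neg_mem _ ihb
      have := hclosed _ hW
      rwa [mul_assoc] at this
    · -- stdMon γ * φ s
      exact F_mono φ x (by omega) (Wgrp_le_F φ x γ (stdMon_mul_φ φ x σ δ hσ γ s))
    · -- ∑ k, stdMon γ * (φ (t k) * x k)
      intro k _
      have hW : stdMon x γ * φ (t k) ∈ Wgrp φ x γ := stdMon_mul_φ φ x σ δ hσ γ _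
      have hclosed : ∀ b ∈ Wgrp φ x γ, b * x k ∈ pbwFilt φ x ((∑ l, β l) + 1) := by
        intro b hb
        induction hb using AddSubgroup.closure_induction with
        | mem b hb =>
          obtain ⟨a, μ, hμ, rfl⟩ := hb
          have hμs : (∑ l, μ l) ≤ ∑ l, γ l := Finset.sum_le_sum fun l _ => hμ l
          have h1 : stdMon x μ * x k ∈ pbwFilt φ x ((∑ l, μ l) + 1) :=
            IH ((∑ l, μ l) * (n + 1) + (n - k.val))
              (by
                have h2 : (∑ l, μ l) * (n+1) ≤ (∑ l, γ l) * (n+1) := Nat.mul_le_mul_right _ hμs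
                have h3 : n - k.val ≤ n := Nat.sub_le _ _
                have h5 : n - i.val ≤ n := Nat.sub_le _ _
                omega) μ k (le_refl _)
          rw [mul_assoc]
          exact F_mono φ x (by omega) (smul_mem_F φ x a h1)
        | zero => rw [zero_mul]; exact AddSubgroup.zero_mem _
        | add b d hb hd ihb ihd => rw [add_mul]; exact AddSubgroup.add_mem _ ihb ihd
        | neg b hb ihb => rw [neg_mul]; exact AddSubgroup.neg_mem _ ihb
      have := hclosed _ hW
      rwa [mul_assoc] at this
end
section
variable {R A : Type*} [Ring R] [Ring A] {n : ℕ} (φ : R →+* A) (x : Fin n → A)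
  (σ δ : Fin n → R → R)
  (hσ : ∀ (i : Fin n) (r : R), x i * φ r = φ (σ i r) * x i + φ (δ i r))
  (c : Fin n → Fin n → R)
  (hrel : ∀ i j : Fin n, ∃ (s : R) (t : Fin n → R),
      x j * x i = φ (c i j) * (x i * x j) + φ s + ∑ k, φ (t k) * x k)

include hσ hrel in
lemma F_mul_X {m : ℕ} {a : A} (ha : a ∈ pbwFilt φ x m) (i : Fin n) :
    a * x i ∈ pbwFilt φ x (m + 1) := by
  induction ha using AddSubgroup.closure_induction with
  | mem b hb =>
    obtain ⟨r, ν, hν, rfl⟩ := hb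
    have h1 : stdMon x ν * x i ∈ pbwFilt φ x ((∑ l, ν l) + 1) :=
      stdMon_mul_X_mem φ x σ δ hσ c hrel ((∑ l, ν l) * (n + 1) + (n - i.val)) ν i (le_refl _)
    rw [mul_assoc]
    exact F_mono φ x (by omega) (smul_mem_F φ x r h1)
  | zero => rw [zero_mul]; exact AddSubgroup.zero_mem _
  | add b d hb hd ihb ihd => rw [add_mul]; exact AddSubgroup.add_mem _ ihb ihd
  | neg b hb ihb => rw [neg_mul]; exact AddSubgroup.neg_mem _ ihb

include hσ in
lemma F_mul_φ {m : ℕ} {a : A} (ha : a ∈ pbwFilt φ x m) (r : R) :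
    a * φ r ∈ pbwFilt φ x m := by
  induction ha using AddSubgroup.closure_induction with
  | mem b hb =>
    obtain ⟨r', ν, hν, rfl⟩ := hb
    rw [mul_assoc]
    exact smul_mem_F φ x r' (F_mono φ x hν (Wgrp_le_F φ x ν (stdMon_mul_φ φ x σ δ hσ ν r)))
  | zero => rw [zero_mul]; exact AddSubgroup.zero_mem _
  | add b d hb hd ihb ihd => rw [add_mul]; exact AddSubgroup.add_mem _ ihb ihd
  | neg b hb ihb => rw [neg_mul]; exact AddSubgroup.neg_mem _ ihb

include hσ hrel in
lemma F_mul_stdMon {m : ℕ} {a : A} (ha : a ∈ pbwFilt φ x m) (β : Fin n → ℕ) :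
    a * stdMon x β ∈ pbwFilt φ x (m + ∑ k, β k) := by
  generalize hM : (∑ k, β k) = M
  induction M using Nat.strong_induction_on generalizing β with
  | _ M IH =>
  by_cases h0 : ∀ k, β k = 0
  · rw [stdMon_zero x h0, mul_one]
    exact F_mono φ x (by omega) ha
  · push_neg at h0
    obtain ⟨γ, j, hpeel, hsum, hle, htop, hγj, -⟩ := exists_peel x β h0
    rw [hpeel, ← mul_assoc]
    have h1 : a * stdMon x γ ∈ pbwFilt φ x (m + ∑ k, γ k) :=
      IH (∑ k, γ k) (by omega) γ rfl
    have h2 := F_mul_X φ x σ δ hσ c hrel h1 j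
    exact F_mono φ x (by omega) h2

include hσ hrel in
lemma F_mul {m p : ℕ} {a b : A} (ha : a ∈ pbwFilt φ x m) (hb : b ∈ pbwFilt φ x p) :
    a * b ∈ pbwFilt φ x (m + p) := by
  induction hb using AddSubgroup.closure_induction with
  | mem b hb =>
    obtain ⟨r, ν, hν, rfl⟩ := hb
    rw [← mul_assoc]
    have h1 := F_mul_stdMon φ x σ δ hσ c hrel (F_mul_φ φ x σ δ hσ ha r) ν
    exact F_mono φ x (by omega) h1
  | zero => rw [mul_zero]; exact AddSubgroup.zero_mem _
  | add b d hb hd ihb ihd => rw [mul_add]; exact AddSubgroup.add_mem _ ihb ihd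
  | neg b hb ihb => rw [mul_neg]; exact AddSubgroup.neg_mem _ ihb
end
lemma grc {R A G : Type*} [Ring R] [Ring A] [Ring G] {n : ℕ} {φ : R →+* A} {x : Fin n → A}
    (gr : ∀ m : ℕ, ↥(pbwFilt φ x m) →+ G) {m m' : ℕ} (e : m = m')
    (a : A) (h : a ∈ pbwFilt φ x m) (h' : a ∈ pbwFilt φ x m') :
    gr m ⟨a, h⟩ = gr m' ⟨a, h'⟩ := by subst e; rfl

lemma coe_of_apply {G : Type*} [AddCommGroup G] {ι : Type*} [DecidableEq ι]
    (M : ι → AddSubgroup G) (i j : ι) (g : ↥(M i)) :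
    ((DirectSum.of (fun k => ↥(M k)) i g) j : G) = if i = j then (g : G) else 0 := by
  by_cases h : i = j
  · subst h; rw [DirectSum.of_eq_same, if_pos rfl]
  · rw [DirectSum.of_eq_of_ne _ _ _ (Ne.symm h), if_neg h]; rfl

section gradedlemmas
variable {R A G : Type*} [Ring R] [Ring A] [Ring G] {n : ℕ} (φ : R →+* A) (x : Fin n → A)
  (gr : ∀ m : ℕ, ↥(pbwFilt φ x m) →+ G)
  (hmul : ∀ (m p : ℕ) (a : ↥(pbwFilt φ x m)) (b : ↥(pbwFilt φ x p))
      (hab : (a : A) * (b : A) ∈ pbwFilt φ x (m + p)),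
      gr m a * gr p b = gr (m + p) ⟨(a : A) * (b : A), hab⟩)
  (hone : ∀ h1 : (1 : A) ∈ pbwFilt φ x 0, gr 0 ⟨1, h1⟩ = 1)
  (hx1 : ∀ i, x i ∈ pbwFilt φ x 1)

include hmul hone in
lemma gr_stdMon : ∀ (M : ℕ) (β : Fin n → ℕ), (∑ k, β k) ≤ M →
    ∀ (hm : stdMon x β ∈ pbwFilt φ x (∑ k, β k)),
    gr (∑ k, β k) ⟨stdMon x β, hm⟩ = stdMon (fun i => gr 1 ⟨x i, hx1 i⟩) β := by
  intro M
  induction M using Nat.strong_induction_on with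
  | _ M IH =>
  intro β hβM hm
  by_cases h0 : ∀ k, β k = 0
  · have hs0 : (∑ k, β k) = 0 := Finset.sum_eq_zero fun k _ => h0 k
    have hm0 : stdMon x β ∈ pbwFilt φ x 0 := by rw [← hs0]; exact hm
    rw [grc gr hs0 _ hm hm0]
    have h1A : (1 : A) ∈ pbwFilt φ x 0 := by rw [← stdMon_zero x h0]; exact hm0
    have e1 : (⟨stdMon x β, hm0⟩ : ↥(pbwFilt φ x 0)) = ⟨1, h1A⟩ :=
      Subtype.ext (stdMon_zero x h0)
    rw [e1, hone h1A, stdMon_zero _ h0]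
  · push_neg at h0
    obtain ⟨γ, j, hpeel, hsum, hle, htop, hγj, hupd⟩ := exists_peel x β h0
    have hγm : stdMon x γ ∈ pbwFilt φ x (∑ k, γ k) := stdMon_mem_F φ x (le_refl _)
    have hprod : stdMon x γ * x j ∈ pbwFilt φ x ((∑ k, γ k) + 1) := by
      rw [← hpeel, hsum]; exact stdMon_mem_F φ x (le_refl _)
    have e0 : gr (∑ k, β k) ⟨stdMon x β, hm⟩
        = gr ((∑ k, γ k) + 1) ⟨stdMon x γ * x j, hprod⟩ := by
      have hm' : stdMon x β ∈ pbwFilt φ x ((∑ k, γ k) + 1) := by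
        rw [hsum]; exact hm
      rw [grc gr hsum.symm _ hm hm']
      exact congrArg _ (Subtype.ext hpeel)
    have e1 := hmul (∑ k, γ k) 1 ⟨stdMon x γ, hγm⟩ ⟨x j, hx1 j⟩ hprod
    rw [e0, ← e1, IH (∑ k, γ k) (by omega) γ (le_refl _) hγm]
    have hγtop : ∀ k, j < k → γ k = 0 := fun k hk =>
      Nat.le_antisymm (le_trans (hle k) (le_of_eq (htop k hk))) (Nat.zero_le _)
    rw [stdMon_mul_X (fun i => gr 1 ⟨x i, hx1 i⟩) γ j hγtop, hupd]

include hmul hone in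
lemma gr_gen (hφ0 : ∀ r : R, φ r ∈ pbwFilt φ x 0) (ψ : R →+* G)
    (hψ : ∀ r : R, ψ r = gr 0 ⟨φ r, hφ0 r⟩) (r : R) (β : Fin n → ℕ)
    (hmem : φ r * stdMon x β ∈ pbwFilt φ x (∑ k, β k)) :
    gr (∑ k, β k) ⟨φ r * stdMon x β, hmem⟩
      = ψ r * stdMon (fun i => gr 1 ⟨x i, hx1 i⟩) β := by
  have h0 : φ r * stdMon x β ∈ pbwFilt φ x (0 + ∑ k, β k) := by
    rw [Nat.zero_add]; exact hmem
  have e1 := hmul 0 (∑ k, β k) ⟨φ r, hφ0 r⟩ ⟨stdMon x β, stdMon_mem_F φ x (le_refl _)⟩ h0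
  rw [grc gr (Nat.zero_add _).symm _ hmem h0, ← e1,
    gr_stdMon φ x gr hmul hone hx1 (∑ k, β k) β (le_refl _), hψ r]

end gradedlemmas

set_option maxHeartbeats 1000000 in
set_option synthInstance.maxHeartbeats 400000 in
/-- Theorem: a skew PBW extension `A` of `R` is ℕ-filtered by `F_m = {f | deg f ≤ m}`
(`F_0 = R`), and its associated graded ring `Gr(A) = ⊕ₘ F_m/F_{m-1}` is a
quasi-commutative skew PBW extension of `R` in the classes `x̄₁,…,x̄ₙ` of the variables,
with parameters `σᵢ`, `c_{ij}` those of `A`:  the standard monomials in the `x̄ᵢ` are a free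
left `R`-module basis of `Gr(A)`, `x̄ᵢ r = σᵢ(r) x̄ᵢ` and `x̄ⱼ x̄ᵢ = c_{ij} x̄ᵢ x̄ⱼ`. -/
theorem stmt3 {R A : Type*} [Ring R] [Ring A] {n : ℕ} (φ : R →+* A) (x : Fin n → A)
    (h : IsSkewPBWExt φ x)
    -- the parameters of A: σᵢ, δᵢ and the constants c_{ij}
    (σ δ : Fin n → R → R)
    (hσ : ∀ (i : Fin n) (r : R), x i * φ r = φ (σ i r) * x i + φ (δ i r))
    (hσinj : ∀ i, Function.Injective (σ i))
    (c : Fin n → Fin n → R) (hc : ∀ i j, c i j ≠ 0)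
    (hrel : ∀ i j : Fin n, ∃ (s : R) (t : Fin n → R),
        x j * x i = φ (c i j) * (x i * x j) + φ s + ∑ k, φ (t k) * x k) :
    -- (1) A is ℕ-filtered by the F_m, with F_0 = R
    (∀ m : ℕ, pbwFilt φ x m ≤ pbwFilt φ x (m + 1)) ∧
    ((⨆ m : ℕ, pbwFilt φ x m) = (⊤ : AddSubgroup A)) ∧
    (∀ m p : ℕ, ∀ a ∈ pbwFilt φ x m, ∀ b ∈ pbwFilt φ x p, a * b ∈ pbwFilt φ x (m + p)) ∧
    ((pbwFilt φ x 0 : Set A) = Set.range φ) ∧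
    -- (2) any realization `G` of the associated graded ring `Gr(A) = ⊕ₘ F_m/F_{m-1}`
    -- is a quasi-commutative skew PBW extension of R
    (∀ (G : Type*) [Ring G] (Ggr : ℕ → AddSubgroup G)
        (gr : ∀ m : ℕ, ↥(pbwFilt φ x m) →+ G),
      -- gr m realizes F_m/F_{m-1} as the m-th homogeneous component of G:
      (∀ m : ℕ, (gr m).range = Ggr m) →
      ((gr 0).ker = ⊥) →
      (∀ m : ℕ, (gr (m + 1)).ker =
        (pbwFilt φ x m).addSubgroupOf (pbwFilt φ x (m + 1))) →
      DirectSum.IsInternal Ggr →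
      -- multiplication of G is induced by that of A:
      (∀ (m p : ℕ) (a : ↥(pbwFilt φ x m)) (b : ↥(pbwFilt φ x p))
          (hab : (a : A) * (b : A) ∈ pbwFilt φ x (m + p)),
          gr m a * gr p b = gr (m + p) ⟨(a : A) * (b : A), hab⟩) →
      (∀ h1 : (1 : A) ∈ pbwFilt φ x 0, gr 0 ⟨1, h1⟩ = 1) →
      -- the data: R maps into G via ψ := gr 0 ∘ φ, and x̄ᵢ := gr 1 (xᵢ)
      ∀ (hφ0 : ∀ r : R, φ r ∈ pbwFilt φ x 0) (hx1 : ∀ i, x i ∈ pbwFilt φ x 1)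
        (ψ : R →+* G), (∀ r : R, ψ r = gr 0 ⟨φ r, hφ0 r⟩) →
      -- conclusion: G is a quasi-commutative skew PBW extension of R with
      -- variables x̄ᵢ and parameters σᵢ, c_{ij}
      (Function.Injective ψ ∧
        (letI : Module R G := Module.compHom G ψ;
          LinearIndependent R (stdMon fun i => gr 1 ⟨x i, hx1 i⟩) ∧
            Submodule.span R (Set.range (stdMon fun i => gr 1 ⟨x i, hx1 i⟩))
              = (⊤ : Submodule R G)) ∧
        (∀ (i : Fin n) (r : R), r ≠ 0 →
          gr 1 ⟨x i, hx1 i⟩ * ψ r = ψ (σ i r) * gr 1 ⟨x i, hx1 i⟩) ∧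
        (∀ i j : Fin n,
          gr 1 ⟨x j, hx1 j⟩ * gr 1 ⟨x i, hx1 i⟩ =
            ψ (c i j) * (gr 1 ⟨x i, hx1 i⟩ * gr 1 ⟨x j, hx1 j⟩)))) := by
  classical
  obtain ⟨hinj, hbasis, -, -⟩ := h
  letI : Module R A := Module.compHom A φ
  obtain ⟨hLI, hspan⟩ := hbasis
  have hdir : Directed (· ≤ ·) (pbwFilt φ x) := fun a b =>
    ⟨max a b, F_mono φ x (le_max_left a b), F_mono φ x (le_max_right a b)⟩
  have hFspan : ∀ (p : ℕ) (a : A), a ∈ pbwFilt φ x p →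
      a ∈ Submodule.span R (stdMon x '' {γ | (∑ k, γ k) ≤ p}) := by
    intro p a ha
    induction ha using AddSubgroup.closure_induction with
    | mem b hb =>
      obtain ⟨r, α, hα, rfl⟩ := hb
      exact Submodule.smul_mem _ r (Submodule.subset_span ⟨α, hα, rfl⟩)
    | zero => exact zero_mem _
    | add b d hb hd ihb ihd => exact add_mem ihb ihd
    | neg b hb ihb => exact neg_mem ihb
  refine ⟨fun m => F_mono φ x (Nat.le_succ m), ?_,
    fun m p a ha b hb => F_mul φ x σ δ hσ c hrel ha hb, ?_, ?_⟩
  · -- iSup = ⊤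
    rw [eq_top_iff]
    intro a hTa
    clear hTa
    have ha : a ∈ Submodule.span R (Set.range (stdMon x)) := by rw [hspan]; trivial
    induction ha using Submodule.span_induction with
    | mem b hb =>
      obtain ⟨α, rfl⟩ := hb
      exact (AddSubgroup.mem_iSup_of_directed hdir).mpr
        ⟨∑ k, α k, stdMon_mem_F φ x (le_refl _)⟩
    | zero => exact zero_mem _
    | add b d hb hd ihb ihd => exact add_mem ihb ihd
    | smul r b hb ihb =>
      obtain ⟨m, hm⟩ := (AddSubgroup.mem_iSup_of_directed hdir).mp ihb
      exact (AddSubgroup.mem_iSup_of_directed hdir).mpr ⟨m, smul_mem_F φ x r hm⟩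
  · -- F 0 = range φ
    ext a
    simp only [SetLike.mem_coe, Set.mem_range]
    constructor
    · intro ha
      induction ha using AddSubgroup.closure_induction with
      | mem b hb =>
        obtain ⟨r, α, hα, rfl⟩ := hb
        have hz : ∀ k, α k = 0 := fun k =>
          Finset.sum_eq_zero_iff.mp (Nat.le_zero.mp hα) k (Finset.mem_univ k)
        exact ⟨r, by rw [stdMon_zero x hz, mul_one]⟩
      | zero => exact ⟨0, map_zero φ⟩
      | add b d hb hd ihb ihd =>
        obtain ⟨r1, rfl⟩ := ihb; obtain ⟨r2, rfl⟩ := ihd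
        exact ⟨r1 + r2, map_add φ r1 r2⟩
      | neg b hb ihb =>
        obtain ⟨r1, rfl⟩ := ihb
        exact ⟨-r1, map_neg φ r1⟩
    · rintro ⟨r, rfl⟩
      have := gen_mem_F φ x (r := r) (α := fun _ : Fin n => 0) (m := 0) (by simp)
      rwa [stdMon_zero x (fun _ => rfl), mul_one] at this
  · -- graded part
    intro G _ Ggr gr hrange hker0 hker hint hmul hone hφ0 hx1 ψ hψ
    have hgen : ∀ (r : R) (β : Fin n → ℕ)
        (hmem : φ r * stdMon x β ∈ pbwFilt φ x (∑ k, β k)),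
        gr (∑ k, β k) ⟨φ r * stdMon x β, hmem⟩
          = ψ r * stdMon (fun i => gr 1 ⟨x i, hx1 i⟩) β :=
      gr_gen φ x gr hmul hone hx1 hφ0 ψ hψ
    have hzero : ∀ (m' m : ℕ), m' + 1 = m → ∀ (a : A) (hh : a ∈ pbwFilt φ x m),
        a ∈ pbwFilt φ x m' → gr m ⟨a, hh⟩ = 0 := by
      intro m' m e a hh h'
      subst e
      have hk : (⟨a, hh⟩ : ↥(pbwFilt φ x (m'+1))) ∈ (gr (m'+1)).ker := by
        rw [hker m']
        exact AddSubgroup.mem_addSubgroupOf.mpr h'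
      exact AddMonoidHom.mem_ker.mp hk
    have hinjψ : Function.Injective ψ := by
      intro r1 r2 e
      have e2 : gr 0 (⟨φ r1, hφ0 r1⟩ - ⟨φ r2, hφ0 r2⟩) = 0 := by
        rw [map_sub, ← hψ r1, ← hψ r2, e, sub_self]
      have e3 : (⟨φ r1, hφ0 r1⟩ - ⟨φ r2, hφ0 r2⟩ : ↥(pbwFilt φ x 0)) = 0 := by
        have h4 := AddMonoidHom.mem_ker.mpr e2
        rw [hker0] at h4
        exact AddSubgroup.mem_bot.mp h4
      have e4 : φ r1 = φ r2 := by
        have h5 := congrArg Subtype.val e3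
        simpa [sub_eq_zero] using h5
      exact hinj e4
    refine ⟨hinjψ, ?_, ?_, ?_⟩
    · -- basis
      letI : Module R G := Module.compHom G ψ
      refine ⟨?_, ?_⟩
      · -- linear independence
        rw [linearIndependent_iff]
        intro l hl
        ext β₀
        simp only [Finsupp.coe_zero, Pi.zero_apply]
        obtain ⟨m, hm⟩ : ∃ m, (∑ k, β₀ k) = m := ⟨_, rfl⟩
        have hmemG : ∀ β : Fin n → ℕ,
            ψ (l β) * stdMon (fun i => gr 1 ⟨x i, hx1 i⟩) β ∈ Ggr (∑ k, β k) := by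
          intro β
          rw [← hrange]
          exact ⟨⟨φ (l β) * stdMon x β, gen_mem_F φ x (le_refl _)⟩, hgen (l β) β _⟩
        set v : DirectSum ℕ (fun k => ↥(Ggr k)) :=
          ∑ β ∈ l.support, DirectSum.of (fun k => ↥(Ggr k)) (∑ k, β k)
            ⟨ψ (l β) * stdMon (fun i => gr 1 ⟨x i, hx1 i⟩) β, hmemG β⟩ with hvdef
        have hlc : ∑ β ∈ l.support,
            ψ (l β) * stdMon (fun i => gr 1 ⟨x i, hx1 i⟩) β = 0 := by
          rw [← hl, Finsupp.linearCombination_apply]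
          rfl
        have hv0 : v = 0 := by
          apply hint.injective
          rw [map_zero, hvdef, map_sum, ← hlc]
          exact Finset.sum_congr rfl fun β _ => DirectSum.coeAddMonoidHom_of Ggr _ _
        have hcomp : ((v m : ↥(Ggr m)) : G) = 0 := by rw [hv0]; rfl
        rw [hvdef, DFinsupp.finset_sum_apply, AddSubmonoidClass.coe_finset_sum] at hcomp
        have hcomp2 : ∑ β ∈ l.support,
            (if (∑ k, β k) = m then ψ (l β) * stdMon (fun i => gr 1 ⟨x i, hx1 i⟩) β
              else 0) = 0 :=
          (Finset.sum_congr rfl fun β _ => (coe_of_apply Ggr _ m _).symm).trans hcomp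
        rw [← Finset.sum_filter] at hcomp2
        set S := l.support.filter (fun β => (∑ k, β k) = m) with hSdef
        have hmemA : ∀ β ∈ S, φ (l β) * stdMon x β ∈ pbwFilt φ x m := by
          intro β hβ
          have h6 := (Finset.mem_filter.mp hβ).2
          rw [← h6]
          exact gen_mem_F φ x (le_refl _)
        have hU' : gr m (∑ β ∈ S.attach,
            (⟨φ (l β.1) * stdMon x β.1, hmemA β.1 β.2⟩ : ↥(pbwFilt φ x m))) = 0 := by
          rw [map_sum]
          have hterm : ∀ β ∈ S.attach,
              gr m (⟨φ (l β.1) * stdMon x β.1, hmemA β.1 β.2⟩ : ↥(pbwFilt φ x m))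
                = ψ (l β.1) * stdMon (fun i => gr 1 ⟨x i, hx1 i⟩) β.1 := by
            intro β _
            have e : (∑ k, β.1 k) = m := (Finset.mem_filter.mp β.2).2
            rw [← grc gr e _ (gen_mem_F φ x (le_refl _)) (hmemA β.1 β.2)]
            exact hgen (l β.1) β.1 _
          rw [Finset.sum_congr rfl hterm,
            Finset.sum_attach S (fun β => ψ (l β) * stdMon (fun i => gr 1 ⟨x i, hx1 i⟩) β)]
          exact hcomp2
        have hUA : (((∑ β ∈ S.attach,
            (⟨φ (l β.1) * stdMon x β.1, hmemA β.1 β.2⟩ : ↥(pbwFilt φ x m)))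
              : ↥(pbwFilt φ x m)) : A)
              = ∑ β ∈ S, φ (l β) * stdMon x β := by
          rw [AddSubmonoidClass.coe_finset_sum]
          exact Finset.sum_attach S (fun β => φ (l β) * stdMon x β)
        have hl₁ : Finsupp.linearCombination R (stdMon x)
            (l.filter (fun β => (∑ k, β k) = m)) = ∑ β ∈ S, φ (l β) * stdMon x β := by
          simp only [Finsupp.linearCombination_apply, Finsupp.sum, Finsupp.support_filter]
          rw [← hSdef]
          refine Finset.sum_congr rfl fun β hβ => ?_
          rw [Finsupp.filter_apply_pos _ _ (Finset.mem_filter.mp (hSdef ▸ hβ)).2]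
          rfl
        have hfilterβ₀ : (l.filter (fun β => (∑ k, β k) = m)) β₀ = l β₀ :=
          Finsupp.filter_apply_pos _ _ hm
        rcases Nat.eq_zero_or_pos m with hm0 | hmpos
        · subst hm0
          have hU0 : (∑ β ∈ S.attach,
              (⟨φ (l β.1) * stdMon x β.1, hmemA β.1 β.2⟩ : ↥(pbwFilt φ x 0))) = 0 := by
            have h7 := AddMonoidHom.mem_ker.mpr hU'
            rw [hker0] at h7
            exact AddSubgroup.mem_bot.mp h7
          have hUA0 : (∑ β ∈ S, φ (l β) * stdMon x β) = 0 := by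
            rw [← hUA, hU0]; rfl
          have hfz : l.filter (fun β => (∑ k, β k) = 0) = 0 :=
            linearIndependent_iff.mp hLI _ (by rw [hl₁, hUA0])
          rw [← hfilterβ₀, hfz]
          rfl
        · obtain ⟨m', rfl⟩ : ∃ m', m = m' + 1 := ⟨m - 1, by omega⟩
          have hUk := AddMonoidHom.mem_ker.mpr hU'
          rw [hker m'] at hUk
          have hUm' := AddSubgroup.mem_addSubgroupOf.mp hUk
          rw [hUA] at hUm'
          obtain ⟨l₂, hl₂supp, hl₂c⟩ :=
            (Finsupp.mem_span_image_iff_linearCombination R).mp (hFspan m' _ hUm')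
          have hdiff : l.filter (fun β => (∑ k, β k) = m' + 1) = l₂ := by
            have hz : Finsupp.linearCombination R (stdMon x)
                (l.filter (fun β => (∑ k, β k) = m' + 1) - l₂) = 0 := by
              rw [map_sub, hl₁, hl₂c, sub_self]
            exact sub_eq_zero.mp (linearIndependent_iff.mp hLI _ hz)
          have hl2z : l₂ β₀ = 0 := by
            by_contra hne
            have hsupp := (Finsupp.mem_supported R l₂).mp hl₂supp
              (Finsupp.mem_support_iff.mpr hne)
            have : (∑ k, β₀ k) ≤ m' := hsupp
            omega
          rw [← hfilterβ₀, hdiff, hl2z]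
      · -- spanning
        rw [eq_top_iff]
        intro g _
        obtain ⟨v, rfl⟩ := hint.surjective g
        refine DirectSum.induction_on v ?_ (fun i gg => ?_) (fun v w ihv ihw => ?_)
        · rw [map_zero]; exact zero_mem _
        · rw [DirectSum.coeAddMonoidHom_of]
          have hgg : (gg : G) ∈ (gr i).range := by rw [hrange i]; exact gg.2
          obtain ⟨a, ha⟩ := hgg
          rw [← ha]
          obtain ⟨b, hb⟩ := a
          clear ha
          induction hb using AddSubgroup.closure_induction with
          | mem bb hbb =>
            obtain ⟨r, α, hα, rfl⟩ := hbb
            suffices key : ∀ hh : φ r * stdMon x α ∈ pbwFilt φ x i, gr i ⟨φ r * stdMon x α, hh⟩ ∈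
                Submodule.span R (Set.range (stdMon fun i => gr 1 ⟨x i, hx1 i⟩)) from key _
            intro hh
            rcases eq_or_lt_of_le hα with heq | hlt
            · rw [grc gr heq.symm _ _ (gen_mem_F φ x (le_refl _)), hgen r α _]
              exact Submodule.smul_mem _ r (Submodule.subset_span ⟨α, rfl⟩)
            · obtain ⟨i', rfl⟩ : ∃ i', i = i' + 1 := ⟨i - 1, by omega⟩
              rw [hzero i' (i' + 1) rfl _ _ (gen_mem_F φ x (by omega))]
              exact zero_mem _
          | zero =>
            rw [show (⟨0, (pbwFilt φ x i).zero_mem⟩ : ↥(pbwFilt φ x i)) = 0 from rfl,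
              map_zero]
            exact zero_mem _
          | add b1 b2 h1 h2 ih1 ih2 =>
            rw [show (⟨b1 + b2, add_mem h1 h2⟩ : ↥(pbwFilt φ x i))
              = ⟨b1, h1⟩ + ⟨b2, h2⟩ from rfl, map_add]
            exact add_mem ih1 ih2
          | neg b1 h1 ih1 =>
            rw [show (⟨-b1, neg_mem h1⟩ : ↥(pbwFilt φ x i)) = -⟨b1, h1⟩ from rfl,
              map_neg]
            exact neg_mem ih1
        · rw [map_add]; exact add_mem ihv ihw
    · -- relation with σ
      intro i r _
      have hab : x i * φ r ∈ pbwFilt φ x (1 + 0) := by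
        rw [hσ i r]
        exact add_mem (smul_mem_F φ x _ (hx1 i)) (F_mono φ x (Nat.zero_le 1) (hφ0 _))
      have hmem1 : φ (σ i r) * x i ∈ pbwFilt φ x 1 := smul_mem_F φ x _ (hx1 i)
      have hmem2 : φ (δ i r) ∈ pbwFilt φ x 1 := F_mono φ x (Nat.zero_le 1) (hφ0 _)
      calc gr 1 ⟨x i, hx1 i⟩ * ψ r
          = gr 1 ⟨x i, hx1 i⟩ * gr 0 ⟨φ r, hφ0 r⟩ := by rw [hψ]
        _ = gr 1 ⟨x i * φ r, hab⟩ := hmul 1 0 _ _ hab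
        _ = gr 1 ⟨φ (σ i r) * x i, hmem1⟩ + gr 1 ⟨φ (δ i r), hmem2⟩ := by
            rw [← map_add]
            exact congrArg _ (Subtype.ext (hσ i r))
        _ = gr 1 ⟨φ (σ i r) * x i, hmem1⟩ := by
            rw [hzero 0 1 rfl _ _ (hφ0 _), add_zero]
        _ = gr 0 ⟨φ (σ i r), hφ0 _⟩ * gr 1 ⟨x i, hx1 i⟩ :=
            (hmul 0 1 ⟨φ (σ i r), hφ0 _⟩ ⟨x i, hx1 i⟩ hmem1).symm
        _ = ψ (σ i r) * gr 1 ⟨x i, hx1 i⟩ := by rw [hψ]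
    · -- relation with c
      intro i j
      have hxij : x i * x j ∈ pbwFilt φ x (1 + 1) :=
        F_mul φ x σ δ hσ c hrel (hx1 i) (hx1 j)
      have hab : x j * x i ∈ pbwFilt φ x (1 + 1) :=
        F_mul φ x σ δ hσ c hrel (hx1 j) (hx1 i)
      obtain ⟨s, t, hst⟩ := hrel i j
      have hm1 : φ (c i j) * (x i * x j) ∈ pbwFilt φ x (1 + 1) := smul_mem_F φ x _ hxij
      have hm2' : φ s + ∑ k, φ (t k) * x k ∈ pbwFilt φ x 1 :=
        add_mem (F_mono φ x (Nat.zero_le 1) (hφ0 s))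
          (AddSubgroup.sum_mem _ fun k _ => smul_mem_F φ x _ (hx1 k))
      have hm2 : φ s + ∑ k, φ (t k) * x k ∈ pbwFilt φ x (1 + 1) :=
        F_mono φ x (Nat.le_succ 1) hm2'
      calc gr 1 ⟨x j, hx1 j⟩ * gr 1 ⟨x i, hx1 i⟩
          = gr (1 + 1) ⟨x j * x i, hab⟩ := hmul 1 1 _ _ hab
        _ = gr (1 + 1) ⟨φ (c i j) * (x i * x j), hm1⟩
              + gr (1 + 1) ⟨φ s + ∑ k, φ (t k) * x k, hm2⟩ := by
            rw [← map_add]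
            refine congrArg _ (Subtype.ext ?_)
            show x j * x i
              = φ (c i j) * (x i * x j) + (φ s + ∑ k, φ (t k) * x k)
            rw [hst, add_assoc]
        _ = gr (1 + 1) ⟨φ (c i j) * (x i * x j), hm1⟩ := by
            rw [hzero 1 (1 + 1) rfl _ _ hm2', add_zero]
        _ = gr 0 ⟨φ (c i j), hφ0 _⟩ * gr (1 + 1) ⟨x i * x j, hxij⟩ :=
            (hmul 0 (1 + 1) ⟨φ (c i j), hφ0 _⟩ ⟨x i * x j, hxij⟩ hm1).symm
        _ = ψ (c i j) * (gr 1 ⟨x i, hx1 i⟩ * gr 1 ⟨x j, hx1 j⟩) := by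
            rw [hψ, hmul 1 1 ⟨x i, hx1 i⟩ ⟨x j, hx1 j⟩ hxij]
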